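/- Let H = (V,E) be a proper Eulerian hypergraph, fix a linear order on V and an enumeration of E, with associated list L = (L_1,…,L_t) and inversion sum s(M). Let M be a valid Gram matrix for H and suppose ᾱ : V → M_d(ℂ) (for some d ≥ 1) satisfies: ᾱ(v) is Hermitian and ᾱ(v)² = I for every v ∈ V; ᾱ(u)·ᾱ(v) = (−1)^{M_{u,v}}·ᾱ(v)·ᾱ(u) for all u,v ∈ V; and for every hyperedge e ∈ E, Π_{v∈e} ᾱ(v) = ε_e·I with ε_e ∈ {1,−1} (the product is well defined since factors in a common hyperedge commute). Then the number of hyperedges e with ε_e = −1 is odd if and only if s(M) = 1. -/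

import Mathlib

open Matrix Finset

/-! ### Pauli matrices and observables -/

/-- The Pauli `X` matrix. -/
noncomputable def PX : Matrix (Fin 2) (Fin 2) ℂ := !![0, 1; 1, 0]

/-- The Pauli `Y` matrix. -/
noncomputable def PY : Matrix (Fin 2) (Fin 2) ℂ := !![0, -Complex.I; Complex.I, 0]

/-- The Pauli `Z` matrix. -/
noncomputable def PZ : Matrix (Fin 2) (Fin 2) ℂ := !![1, 0; 0, -1]

/-- The Kronecker (tensor) product of `k` 2×2 matrices, realized as a matrix indexed by
`Fin k → Fin 2` (a type of cardinality `2^k`). -/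
noncomputable def pauliTensor (k : ℕ) (P : Fin k → Matrix (Fin 2) (Fin 2) ℂ) :
    Matrix (Fin k → Fin 2) (Fin k → Fin 2) ℂ :=
  Matrix.of fun f g => ∏ i, P i (f i) (g i)

/-- A `k`-qubit Pauli observable: `ε · (P₁ ⊗ ⋯ ⊗ P_k)` with `ε ∈ {1,-1}` and each
`P_i ∈ {I, X, Y, Z}`. -/
def IsPauliObservable {k : ℕ} (A : Matrix (Fin k → Fin 2) (Fin k → Fin 2) ℂ) : Prop :=
  ∃ (ε : ℂ) (P : Fin k → Matrix (Fin 2) (Fin 2) ℂ),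
    (ε = 1 ∨ ε = -1) ∧ (∀ i, P i = 1 ∨ P i = PX ∨ P i = PY ∨ P i = PZ) ∧
    A = ε • pauliTensor k P

/-! ### Hypergraphs -/

/-- Product of the observables assigned to the vertices of a hyperedge (taken in increasing
order of the vertices; for commuting observables this is the product in any order). -/
noncomputable def edgeProd {V n : Type*} [LinearOrder V] [Fintype n] [DecidableEq n]
    (α : V → Matrix n n ℂ) (e : Finset V) : Matrix n n ℂ :=
  ((e.sort (· ≤ ·)).map α).prod

/-- A proper Eulerian hypergraph: each vertex lies in an even number of hyperedges, there are
no isolated vertices, no empty hyperedges, and all hyperedges are distinct. -/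
def ProperEulerian {V E : Type*} [DecidableEq V] [Fintype E] (edge : E → Finset V) : Prop :=
  (∀ v : V, Even (Finset.univ.filter (fun e : E => v ∈ edge e)).card) ∧
  (∀ v : V, ∃ e : E, v ∈ edge e) ∧
  (∀ e : E, (edge e).Nonempty) ∧
  Function.Injective edge

/-- A valid Gram matrix for a hypergraph. -/
def IsValidGram {V E : Type*} (edge : E → Finset V) (M : Matrix V V (ZMod 2)) : Prop :=
  M.IsSymm ∧ (∀ v, M v v = 0) ∧
  (∀ e : E, ∀ u ∈ edge e, ∀ v ∈ edge e, M u v = 0) ∧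
  (∀ e : E, ∀ v : V, ∑ u ∈ edge e, M u v = 0)

/-- The concatenated list of vertices of the hyperedges, each hyperedge's vertices listed in
increasing order, hyperedges enumerated by the list `le`. -/
def vertexList {V E : Type*} [LinearOrder V] (edge : E → Finset V) (le : List E) : List V :=
  (le.map fun e => (edge e).sort (· ≤ ·)).flatten

/-- The inversion sum `s(M) = ∑_{i<j, L_i > L_j} M_{L_i, L_j}`. -/
def inversionSum {V : Type*} [LinearOrder V] (M : Matrix V V (ZMod 2)) (L : List V) : ZMod 2 :=
  ∑ i : Fin L.length, ∑ j : Fin L.length,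
    if i < j ∧ L.get j < L.get i then M (L.get i) (L.get j) else 0

/-- A magic Gram matrix: a valid Gram matrix with inversion sum 1. -/
def MagicGram {V E : Type*} [LinearOrder V] (edge : E → Finset V) (le : List E)
    (M : Matrix V V (ZMod 2)) : Prop :=
  IsValidGram edge M ∧ inversionSum M (vertexList edge le) = 1

/-- A `k`-qubit Pauli-based magic assignment of a hypergraph. -/
def IsPauliMagicAssignment {V E : Type*} [LinearOrder V] [Fintype E] (k : ℕ)
    (edge : E → Finset V) (α : V → Matrix (Fin k → Fin 2) (Fin k → Fin 2) ℂ) : Prop :=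
  (∀ v, IsPauliObservable (α v)) ∧
  (∀ e : E, ∀ u ∈ edge e, ∀ w ∈ edge e, Commute (α u) (α w)) ∧
  (∀ e : E, edgeProd α (edge e) = 1 ∨ edgeProd α (edge e) = -1) ∧
  Odd (Nat.card {e : E // edgeProd α (edge e) = -1})

/-- A magic assignment of a hypergraph by Hermitian matrices squaring to the identity. -/
def IsMagicAssignment {V E n : Type*} [LinearOrder V] [Fintype E] [Fintype n] [DecidableEq n]
    (edge : E → Finset V) (α : V → Matrix n n ℂ) : Prop :=
  (∀ v, (α v).IsHermitian) ∧ (∀ v, α v * α v = 1) ∧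
  (∀ e : E, ∀ u ∈ edge e, ∀ w ∈ edge e, Commute (α u) (α w)) ∧
  (∀ e : E, edgeProd α (edge e) = 1 ∨ edgeProd α (edge e) = -1) ∧
  Odd (Nat.card {e : E // edgeProd α (edge e) = -1})

open scoped Classical in
/-- The sign vector `c(α) ∈ (ZMod 2)^E` of an assignment: `0` on hyperedges with product `+I`,
`1` on the others. -/
noncomputable def cvec {V E n : Type*} [LinearOrder V] [Fintype E] [Fintype n] [DecidableEq n]
    (edge : E → Finset V) (α : V → Matrix n n ℂ) : E → ZMod 2 :=
  fun e => if edgeProd α (edge e) = 1 then 0 else 1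

/-- The incidence matrix of a hypergraph. -/
def incMatrix {V E : Type*} [DecidableEq V] (edge : E → Finset V) : Matrix V E (ZMod 2) :=
  Matrix.of fun v e => if v ∈ edge e then 1 else 0

/-- Hamming weight of a vector over `ZMod 2`. -/
def hWeight {E : Type*} [Fintype E] (y : E → ZMod 2) : ℕ :=
  (Finset.univ.filter fun e => y e ≠ 0).card

/-- The symplectic product on `(ZMod 2)^{2k}` (coordinates indexed by `Fin k ⊕ Fin k`). -/
def sympl (k : ℕ) (s t : Fin k ⊕ Fin k → ZMod 2) : ZMod 2 :=
  ∑ i : Fin k, (s (Sum.inl i) * t (Sum.inr i) + s (Sum.inr i) * t (Sum.inl i))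


/-! ### Auxiliary machinery for the proof of Statement 6 -/

noncomputable def stmt6Chi (x : ZMod 2) : ℂ := (-1) ^ x.val

lemma stmt6Chi_add (x y : ZMod 2) : stmt6Chi (x + y) = stmt6Chi x * stmt6Chi y := by
  rcases (show ∀ z : ZMod 2, z = 0 ∨ z = 1 by decide) x with rfl | rfl <;>
  rcases (show ∀ z : ZMod 2, z = 0 ∨ z = 1 by decide) y with rfl | rfl <;>
    simp [stmt6Chi, show ZMod.val (2 : ZMod 2) = 0 by decide,
      show ((1 : ZMod 2) + 1) = 0 by decide, show ZMod.val (1 : ZMod 2) = 1 by decide]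

lemma stmt6Chi_zero : stmt6Chi 0 = 1 := rfl

/-- Recursive form of the inversion sum. -/
def sListAux {V : Type*} [LinearOrder V] (M : Matrix V V (ZMod 2)) : List V → ZMod 2
  | [] => 0
  | a :: l => (l.map fun b => if b < a then M a b else 0).sum + sListAux M l

lemma stmt6_map_sum_eq {V R : Type*} [AddCommMonoid R] (f : V → R) :
    ∀ (l : List V), (l.map f).sum = ∑ i : Fin l.length, f (l.get i) := by
  intro l
  induction l with
  | nil => simp
  | cons a l ih =>
    rw [List.map_cons, List.sum_cons, ih]
    exact (Fin.sum_univ_succ (fun i : Fin (l.length + 1) => f ((a :: l).get i))).symm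

lemma inversionSum_eq_sListAux {V : Type*} [LinearOrder V] (M : Matrix V V (ZMod 2)) :
    ∀ L, inversionSum M L = sListAux M L := by
  intro L
  induction L with
  | nil => simp [inversionSum, sListAux]
  | cons a l ih =>
    rw [sListAux, ← ih, stmt6_map_sum_eq]
    show (∑ i : Fin (l.length + 1), ∑ j : Fin (l.length + 1), _) = _
    rw [Fin.sum_univ_succ]
    congr 1
    · rw [Fin.sum_univ_succ]
      simp [Fin.succ_pos]
    · rw [inversionSum]
      refine Finset.sum_congr rfl fun i _ => ?_
      rw [Fin.sum_univ_succ]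
      simp [Fin.succ_lt_succ_iff, (Fin.succ_pos i).not_gt]

section Stmt6Aux

variable {V : Type*} [LinearOrder V] {d : ℕ} (M : Matrix V V (ZMod 2))
  (α : V → Matrix (Fin d) (Fin d) ℂ)
  (hcomm : ∀ u v : V, α u * α v = ((-1 : ℂ) ^ (M u v).val) • (α v * α u))

include hcomm in
lemma stmt6_insert_prod (a : V) : ∀ (L : List V), L.Pairwise (· ≤ ·) →
    α a * ((L.map α).prod) =
      stmt6Chi ((L.map fun b => if b < a then M a b else 0).sum) •
        (((L.orderedInsert (· ≤ ·) a).map α).prod) := by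
  intro L
  induction L with
  | nil => simp [stmt6Chi_zero]
  | cons b L ih =>
    intro hs0
    rw [List.pairwise_cons] at hs0
    obtain ⟨hb, hs⟩ := hs0
    by_cases hab : a ≤ b
    · rw [List.orderedInsert, if_pos hab]
      have hz : ((b :: L).map fun c => if c < a then M a c else 0).sum = 0 := by
        apply List.sum_eq_zero
        intro x hx
        simp only [List.mem_map] at hx
        obtain ⟨c, hc, rfl⟩ := hx
        rcases List.mem_cons.mp hc with rfl | hc
        · rw [if_neg (not_lt.mpr hab)]
        · rw [if_neg (not_lt.mpr (hab.trans (hb c hc)))]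
      rw [hz, stmt6Chi_zero, one_smul]
      simp [List.prod_cons, mul_assoc]
    · rw [List.orderedInsert, if_neg hab]
      push_neg at hab
      have ht := ih hs
      rw [List.map_cons, List.prod_cons, ← mul_assoc, hcomm a b, smul_mul_assoc,
        mul_assoc, ht, List.map_cons, List.sum_cons, if_pos hab, stmt6Chi_add]
      rw [List.map_cons, List.prod_cons, mul_smul_comm, smul_smul]
      rfl

include hcomm in
lemma stmt6_prod_eq_chi_sort : ∀ L : List V,
    (L.map α).prod =
      stmt6Chi (sListAux M L) • (((L.insertionSort (· ≤ ·)).map α).prod) := by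
  intro L
  induction L with
  | nil => simp [sListAux, stmt6Chi_zero]
  | cons a L ih =>
    have hsorted : (L.insertionSort (· ≤ ·)).Pairwise (· ≤ ·) :=
      List.pairwise_insertionSort _ L
    have hperm : List.Perm ((L.insertionSort (· ≤ ·)).map fun b => if b < a then M a b else 0)
        (L.map fun b => if b < a then M a b else 0) :=
      (List.perm_insertionSort _ L).map _
    calc ((a :: L).map α).prod = α a * (L.map α).prod := by
          rw [List.map_cons, List.prod_cons]
      _ = stmt6Chi (sListAux M L) • (α a * ((L.insertionSort (· ≤ ·)).map α).prod) := by
          rw [ih, mul_smul_comm]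
      _ = stmt6Chi (sListAux M L) •
            (stmt6Chi (((L.insertionSort (· ≤ ·)).map
                fun b => if b < a then M a b else 0).sum) •
              ((((L.insertionSort (· ≤ ·)).orderedInsert (· ≤ ·) a).map α).prod)) := by
          rw [stmt6_insert_prod M α hcomm a _ hsorted]
      _ = stmt6Chi (sListAux M (a :: L)) • (((a :: L).insertionSort (· ≤ ·)).map α).prod := by
          rw [smul_smul, hperm.sum_eq, ← stmt6Chi_add, sListAux, add_comm]
          rfl

variable (hsq : ∀ v, α v * α v = 1)

include hsq in
lemma stmt6_sorted_even_prod : ∀ n (L : List V), L.length ≤ n → L.Pairwise (· ≤ ·) →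
    (∀ v, Even (L.count v)) → (L.map α).prod = 1 := by
  intro n
  induction n with
  | zero =>
    intro L hL _ _
    rw [Nat.le_zero, List.length_eq_zero_iff] at hL
    simp [hL]
  | succ n ih =>
    intro L hlen hs hc
    match L with
    | [] => simp
    | a :: L' =>
      have h1 : ¬ Even (L'.count a) := by
        have := hc a
        rw [List.count_cons_self, Nat.even_iff] at this
        rw [Nat.even_iff]
        omega
      have ha : a ∈ L' := by
        by_contra hmem
        rw [List.count_eq_zero_of_not_mem hmem] at h1
        exact h1 Even.zero
      match L' with
      | [] => exact absurd ha List.not_mem_nil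
      | b :: L'' =>
        rw [List.pairwise_cons] at hs
        obtain ⟨hale, hs⟩ := hs
        rw [List.pairwise_cons] at hs
        obtain ⟨hble, hs⟩ := hs
        have hba : b = a := by
          rcases List.mem_cons.mp ha with rfl | ha'
          · rfl
          · exact le_antisymm (hble a ha') (hale b (List.mem_cons_self (a := b) (l := L'')))
        subst hba
        have hprod : ((b :: b :: L'').map α).prod = (L''.map α).prod := by
          rw [List.map_cons, List.map_cons, List.prod_cons, List.prod_cons,
            ← mul_assoc, hsq b, one_mul]
        rw [hprod]
        apply ih L''
        · simp only [List.length_cons] at hlen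
          omega
        · exact hs
        · intro v
          have := hc v
          rw [List.count_cons, List.count_cons, Nat.even_iff] at this
          rw [Nat.even_iff]
          by_cases hv : v = b <;> simp [hv] at this ⊢ <;> omega

end Stmt6Aux


lemma stmt6_prod_smul_one {E : Type*} {d : ℕ} (ε : E → ℂ) :
    ∀ l : List E,
      (l.map fun e => ε e • (1 : Matrix (Fin d) (Fin d) ℂ)).prod = ((l.map ε).prod) • 1 := by
  intro l
  induction l with
  | nil => simp
  | cons a l ih =>
    rw [List.map_cons, List.prod_cons, ih, List.map_cons, List.prod_cons,
      smul_mul_assoc, one_mul, smul_smul]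

/-- For a valid Gram matrix `M` of a proper Eulerian hypergraph and an
assignment `α` of Hermitian square roots of the identity realizing the (anti)commutation
relations of `M` and having hyperedge products `ε_e · I` with `ε_e = ±1`, the number of
hyperedges with `ε_e = -1` is odd iff `s(M) = 1`. -/
theorem stmt6 {V E : Type*} [Fintype V] [LinearOrder V] [Fintype E]
    (edge : E → Finset V) (hH : ProperEulerian edge)
    (le : List E) (hnd : le.Nodup) (hmem : ∀ e : E, e ∈ le)
    (M : Matrix V V (ZMod 2)) (hM : IsValidGram edge M)
    (d : ℕ) (hd : 1 ≤ d) (α : V → Matrix (Fin d) (Fin d) ℂ)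
    (hherm : ∀ v, (α v).IsHermitian) (hsq : ∀ v, α v * α v = 1)
    (hcomm : ∀ u v : V, α u * α v = ((-1 : ℂ) ^ (M u v).val) • (α v * α u))
    (ε : E → ℂ) (hε : ∀ e, ε e = 1 ∨ ε e = -1)
    (hprod : ∀ e : E, edgeProd α (edge e) = ε e • 1) :
    Odd (Nat.card {e : E // ε e = -1}) ↔ inversionSum M (vertexList edge le) = 1 := by
  classical
  set L : List V := vertexList edge le with hLdef
  -- Step A: the product over L equals the product of the ε's, times the identity.
  have hPL : (L.map α).prod = ((le.map ε).prod) • (1 : Matrix (Fin d) (Fin d) ℂ) := by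
    rw [hLdef, vertexList, List.map_flatten, List.prod_flatten, List.map_map, List.map_map]
    refine (congrArg List.prod (List.map_congr_left fun e _ => ?_)).trans
      (stmt6_prod_smul_one ε le)
    exact hprod e
  have huniv : le.toFinset = (Finset.univ : Finset E) :=
    Finset.eq_univ_iff_forall.mpr fun e => List.mem_toFinset.mpr (hmem e)
  -- Step B: each vertex occurs an even number of times in L.
  have hcount : ∀ v, Even (L.count v) := by
    intro v
    rw [hLdef, vertexList, List.count_flatten, List.map_map]
    have hfn : (List.count v ∘ fun e : E => (edge e).sort (· ≤ ·)) =
        fun e : E => if v ∈ edge e then 1 else 0 := by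
      funext e
      by_cases hv : v ∈ edge e
      · rw [Function.comp_apply, if_pos hv]
        exact List.count_eq_one_of_mem (Finset.sort_nodup _ _) ((Finset.mem_sort _).mpr hv)
      · rw [Function.comp_apply, if_neg hv]
        exact List.count_eq_zero_of_not_mem fun h => hv ((Finset.mem_sort _).mp h)
    rw [hfn, ← List.sum_toFinset _ hnd, huniv, ← Finset.card_filter]
    exact hH.1 v
  -- Step C: compare with the inversion sum.
  have hmain : ((le.map ε).prod) • (1 : Matrix (Fin d) (Fin d) ℂ) =
      stmt6Chi (inversionSum M L) • 1 := by
    rw [← hPL, stmt6_prod_eq_chi_sort M α hcomm L, inversionSum_eq_sListAux]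
    congr 1
    apply stmt6_sorted_even_prod α hsq (L.insertionSort (· ≤ ·)).length _ le_rfl
      (List.pairwise_insertionSort _ L)
    intro v
    rw [(List.perm_insertionSort _ L).count_eq]
    exact hcount v
  have hscalar : (le.map ε).prod = stmt6Chi (inversionSum M L) := by
    have h := congrFun (congrFun hmain ⟨0, hd⟩) ⟨0, hd⟩
    simpa [Matrix.smul_apply, Matrix.one_apply_eq] using h
  -- Step D: the product of the ε's is (-1) to the number of negative edges.
  have h1 : (le.map ε).prod = ∏ e : E, ε e := by
    rw [← List.prod_toFinset ε hnd, huniv]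
  have h2 : ∏ e : E, ε e = (-1 : ℂ) ^ (Finset.univ.filter fun e => ε e = -1).card := by
    calc ∏ e : E, ε e = ∏ e : E, (if ε e = -1 then (-1 : ℂ) else 1) :=
          Finset.prod_congr rfl fun e _ => by rcases hε e with h | h <;> rw [h] <;> norm_num
      _ = _ := by rw [Finset.prod_ite]; simp [Finset.prod_const]
  have hN : Nat.card {e : E // ε e = -1} = (Finset.univ.filter fun e => ε e = -1).card := by
    rw [Nat.card_eq_fintype_card]
    exact Fintype.card_subtype _
  set N := (Finset.univ.filter fun e => ε e = -1).card with hNdef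
  have key : (-1 : ℂ) ^ N = stmt6Chi (inversionSum M L) := by rw [← h2, ← h1, hscalar]
  rw [hN]
  have hs01 : ∀ x : ZMod 2, x = 0 ∨ x = 1 := by decide
  rcases hs01 (inversionSum M L) with h0 | h1'
  · rw [h0] at key ⊢
    rw [stmt6Chi_zero] at key
    have hEven : Even N := by
      rcases Nat.even_or_odd N with h | h
      · exact h
      · rw [h.neg_one_pow] at key
        norm_num at key
    constructor
    · intro hodd
      exact absurd hEven (Nat.not_even_iff_odd.mpr hodd)
    · intro h01
      exact absurd h01 (by decide)
  · rw [h1'] at key ⊢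
    have hchi1 : stmt6Chi 1 = -1 := by
      norm_num [stmt6Chi, show ZMod.val (1 : ZMod 2) = 1 by decide]
    rw [hchi1] at key
    have hOdd : Odd N := by
      rcases Nat.even_or_odd N with h | h
      · rw [h.neg_one_pow] at key
        norm_num at key
      · exact h
    simp [hOdd]
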